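/- Let M_1, M_2 be invertible skew-symmetric 8×8 complex matrices such that M_1^{-1}M_2 has 4 distinct eigenvalues. Then each eigenvalue of M_1^{-1}M_2 has algebraic multiplicity exactly 2, and the set of points z ∈ ℂ^8 \ {0} where the covectors ᵗz M_1 and ᵗz M_2 are linearly dependent is the union of the (nonzero points of the) four corresponding eigenspaces. -/

import Mathlib

open Matrix Polynomial

/-- A singular skew-symmetric `8×8` complex matrix has two linearly independent
kernel vectors (its rank is at most 6, via the vanishing of an odd skew determinant). -/
lemma skew_ker_two (N : Matrix (Fin 8) (Fin 8) ℂ) (hskew : Nᵀ = -N) (hdet : N.det = 0) :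
    ∃ u w : Fin 8 → ℂ, N.mulVec u = 0 ∧ N.mulVec w = 0 ∧ LinearIndependent ℂ ![u, w] := by
  by_contra hcon
  push_neg at hcon
  obtain ⟨v, hv0, hvker⟩ := Matrix.exists_mulVec_eq_zero_iff.2 hdet
  -- every kernel vector is a multiple of v
  have hmul : ∀ x, N.mulVec x = 0 → ∃ c : ℂ, x = c • v := by
    intro x hx
    have hnli := hcon v x hvker hx
    rw [LinearIndependent.pair_iff] at hnli
    push_neg at hnli
    obtain ⟨s, t, hst, hne⟩ := hnli
    rcases eq_or_ne t 0 with ht | ht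
    · exfalso
      subst ht
      have hs : s ≠ 0 := fun hs => hne hs rfl
      rw [zero_smul, add_zero] at hst
      exact hv0 ((smul_eq_zero.mp hst).resolve_left hs)
    · refine ⟨-s/t, ?_⟩
      have h3 : t • x = (-s) • v := by
        rw [neg_smul]; exact eq_neg_of_add_eq_zero_right hst
      have h4 : x = t⁻¹ • (t • x) := by rw [smul_smul, inv_mul_cancel₀ ht, one_smul]
      rw [h4, h3, smul_smul, ← div_eq_inv_mul]
  obtain ⟨i₀, hi₀⟩ : ∃ i, v i ≠ 0 := Function.ne_iff.mp hv0
  -- v is also in the left kernel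
  have hleft : v ᵥ* N = 0 := by
    have := Matrix.mulVec_transpose N v
    rw [hskew] at this
    rw [← this, Matrix.neg_mulVec, hvker, neg_zero]
  -- the submatrix deleting row/col i₀ is skew of odd size, hence singular
  set N' : Matrix (Fin 7) (Fin 7) ℂ := N.submatrix i₀.succAbove i₀.succAbove with hN'
  have hdet' : N'.det = 0 := by
    have h1 : N'ᵀ = -N' := by
      rw [hN', Matrix.transpose_submatrix, hskew]
      rfl
    have h2 : N'.det = -N'.det := by
      conv_lhs => rw [← Matrix.det_transpose, h1, Matrix.det_neg]
      norm_num
    linear_combination (1/2 : ℂ) * h2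
  obtain ⟨x, hx0, hxker⟩ := Matrix.exists_mulVec_eq_zero_iff.2 hdet'
  set xt : Fin 8 → ℂ := i₀.insertNth 0 x with hxt
  have hsA : ∀ j : Fin 7, N.mulVec xt (i₀.succAbove j) = 0 := by
    intro j
    have : N.mulVec xt (i₀.succAbove j) = ∑ i, N (i₀.succAbove j) i * xt i := rfl
    rw [this, Fin.sum_univ_succAbove (fun i => N (i₀.succAbove j) i * xt i) i₀]
    simp only [hxt, Fin.insertNth_apply_same, Fin.insertNth_apply_succAbove, mul_zero, zero_add]
    exact congrFun hxker j
  have hAt : N.mulVec xt i₀ = 0 := by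
    have hdp : v ⬝ᵥ N.mulVec xt = 0 := by
      rw [Matrix.dotProduct_mulVec, hleft, zero_dotProduct]
    rw [dotProduct, Fin.sum_univ_succAbove (fun i => v i * N.mulVec xt i) i₀] at hdp
    simp only [hsA, mul_zero, Finset.sum_const_zero, add_zero] at hdp
    exact (mul_eq_zero.mp hdp).resolve_left hi₀
  have hker : N.mulVec xt = 0 := by
    funext i
    rcases eq_or_ne i i₀ with h | h
    · rw [h]; exact hAt
    · obtain ⟨j, hj⟩ := Fin.exists_succAbove_eq h
      rw [← hj]; exact hsA j
  obtain ⟨c, hc⟩ := hmul xt hker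
  have hc0 : c = 0 := by
    have := congrFun hc i₀
    simp only [hxt, Fin.insertNth_apply_same, Pi.smul_apply, smul_eq_mul] at this
    exact (mul_eq_zero.mp this.symm).resolve_right hi₀
  apply hx0
  funext j
  have := congrFun hc (i₀.succAbove j)
  simpa [hxt, hc0] using this

/-- Two independent eigenvectors for the same eigenvalue force `(X - λ)² ∣ charpoly`. -/
lemma eig_sq_dvd (A : Matrix (Fin 8) (Fin 8) ℂ) (lam : ℂ) (u w : Fin 8 → ℂ)
    (hu : A.mulVec u = lam • u) (hw : A.mulVec w = lam • w)
    (hli : LinearIndependent ℂ ![u, w]) :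
    (X - C lam) ^ 2 ∣ A.charpoly := by
  classical
  have huw : u ≠ w := by
    intro h
    have h2 := (LinearIndependent.pair_iff.mp hli 1 (-1) (by rw [h]; module)).1
    exact one_ne_zero h2
  set s : Set (Fin 8 → ℂ) := Set.range ![u, w] with hs
  have hsli : LinearIndepOn ℂ id s := (linearIndepOn_id_range_iff hli.injective).mpr hli
  set t := hsli.extend (Set.subset_univ s) with ht
  let b : Module.Basis t ℂ (Fin 8 → ℂ) := Module.Basis.extend hsli
  haveI : Fintype t := FiniteDimensional.fintypeBasisIndex b
  have hus : u ∈ t := hsli.subset_extend _ ⟨0, rfl⟩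
  have hws : w ∈ t := hsli.subset_extend _ ⟨1, rfl⟩
  set i₀ : t := ⟨u, hus⟩ with hi₀
  set i₁ : t := ⟨w, hws⟩ with hi₁
  have hne : i₀ ≠ i₁ := fun h => huw (congrArg Subtype.val h)
  set f : (Fin 8 → ℂ) →ₗ[ℂ] (Fin 8 → ℂ) := Matrix.toLin' A with hf
  have hcp : A.charpoly = (LinearMap.toMatrix b b f).charpoly := by
    rw [LinearMap.charpoly_toMatrix f b, ← LinearMap.charpoly_toMatrix f (Pi.basisFun ℂ (Fin 8))]
    congr 1
    rw [hf, LinearMap.toMatrix_eq_toMatrix', LinearMap.toMatrix'_toLin']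
  set B := LinearMap.toMatrix b b f with hB
  have hcolgen : ∀ (i₂ : t) (z : Fin 8 → ℂ), (z : Fin 8 → ℂ) = (i₂ : Fin 8 → ℂ) →
      A.mulVec z = lam • z → (fun i => charmatrix B i i₂) = (X - C lam) • Pi.single i₂ 1 := by
    intro i₂ z hz hzeig
    have hBcol : ∀ i, B i i₂ = if i = i₂ then lam else 0 := by
      intro i
      rw [hB, LinearMap.toMatrix_apply]
      have hb : b i₂ = (i₂ : Fin 8 → ℂ) := Module.Basis.extend_apply_self hsli i₂
      rw [hb, ← hz, hf]
      rw [Matrix.toLin'_apply, hzeig, _root_.map_smul, hz]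
      have : b.repr (i₂ : Fin 8 → ℂ) = Finsupp.single i₂ 1 := by rw [← hb, b.repr_self]
      rw [this]
      simp [Finsupp.single_apply, eq_comm]
    funext i
    rcases eq_or_ne i i₂ with h | h
    · subst h
      rw [charmatrix_apply_eq, hBcol i, if_pos rfl]
      simp
    · rw [charmatrix_apply_ne B i i₂ h, hBcol i, if_neg h]
      simp [Pi.single_apply, h]
  have hcol0 := hcolgen i₀ u rfl hu
  have hcol1 := hcolgen i₁ w rfl hw
  have hstep1 : B.charpoly =
      (X - C lam) * ((charmatrix B).updateCol i₀ (Pi.single i₀ (1:ℂ[X]))).det := by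
    rw [Matrix.charpoly]
    conv_lhs => rw [← Matrix.updateCol_eq_self (charmatrix B) i₀]
    rw [hcol0, Matrix.det_updateCol_smul]
  set M2 := (charmatrix B).updateCol i₀ (Pi.single i₀ (1:ℂ[X])) with hM2
  have hstep2 : M2.det = (X - C lam) * (M2.updateCol i₁ (Pi.single i₁ (1:ℂ[X]))).det := by
    conv_lhs => rw [← Matrix.updateCol_eq_self M2 i₁]
    have : (fun i => M2 i i₁) = (X - C lam) • (Pi.single i₁ (1:ℂ[X]) : ↑t → ℂ[X]) := by
      funext i
      rw [hM2, Matrix.updateCol_apply, if_neg hne.symm]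
      exact congrFun hcol1 i
    rw [this, Matrix.det_updateCol_smul]
  refine ⟨(M2.updateCol i₁ (Pi.single i₁ (1:ℂ[X]))).det, ?_⟩
  rw [hcp, hstep1, hstep2]
  ring

/-- for invertible skew-symmetric `8×8` matrices `M₁, M₂` such that
`M₁⁻¹M₂` has 4 distinct eigenvalues, each eigenvalue has algebraic multiplicity
exactly 2, and the locus where `ᵗz M₁` and `ᵗz M₂` are linearly dependent is the
union of the (nonzero points of the) four eigenspaces. -/
theorem stmt4 (M₁ M₂ : Matrix (Fin 8) (Fin 8) ℂ)
    (h₁ : M₁ᵀ = -M₁) (h₂ : M₂ᵀ = -M₂) (hu₁ : IsUnit M₁) (hu₂ : IsUnit M₂)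
    (Λ : Finset ℂ) (hcard : Λ.card = 4)
    (hspec : spectrum ℂ (M₁⁻¹ * M₂) = ↑Λ) :
    (∀ lam ∈ Λ, (M₁⁻¹ * M₂).charpoly.rootMultiplicity lam = 2) ∧
    {z : Fin 8 → ℂ | z ≠ 0 ∧ ∃ a b : ℂ, (a, b) ≠ 0 ∧
        a • Matrix.vecMul z M₁ + b • Matrix.vecMul z M₂ = 0} =
      ⋃ lam ∈ Λ, {z : Fin 8 → ℂ | z ≠ 0 ∧ (M₁⁻¹ * M₂).mulVec z = lam • z} := by
  classical
  set A := M₁⁻¹ * M₂ with hA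
  have hd₁ : IsUnit M₁.det := (Matrix.isUnit_iff_isUnit_det M₁).mp hu₁
  have hd₁0 : M₁.det ≠ 0 := hd₁.ne_zero
  have hM₁M₁ : M₁ * M₁⁻¹ = 1 := Matrix.mul_nonsing_inv M₁ hd₁
  have hM₁'M₁ : M₁⁻¹ * M₁ = 1 := Matrix.nonsing_inv_mul M₁ hd₁
  have hM₁A : M₁ * A = M₂ := by rw [hA, ← mul_assoc, hM₁M₁, one_mul]
  -- eigen-equation versus skew pencil kernel
  have heigiff : ∀ (lam : ℂ) (z : Fin 8 → ℂ),
      A.mulVec z = lam • z ↔ (lam • M₁ - M₂).mulVec z = 0 := by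
    intro lam z
    constructor
    · intro h
      rw [Matrix.sub_mulVec, Matrix.smul_mulVec, ← hM₁A, ← Matrix.mulVec_mulVec, h,
        Matrix.mulVec_smul, sub_self]
    · intro h
      rw [Matrix.sub_mulVec, Matrix.smul_mulVec, sub_eq_zero] at h
      rw [hA, ← Matrix.mulVec_mulVec, ← h, Matrix.mulVec_smul, Matrix.mulVec_mulVec,
        hM₁'M₁, Matrix.one_mulVec]
  -- spectrum membership versus existence of an eigenvector
  have hspeciff : ∀ lam : ℂ, lam ∈ spectrum ℂ A ↔ ∃ z, z ≠ 0 ∧ A.mulVec z = lam • z := by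
    intro lam
    rw [spectrum.mem_iff, Algebra.algebraMap_eq_smul_one, Matrix.isUnit_iff_isUnit_det,
      isUnit_iff_ne_zero, not_not, ← Matrix.exists_mulVec_eq_zero_iff]
    have hzeq : ∀ z : Fin 8 → ℂ,
        (lam • (1 : Matrix (Fin 8) (Fin 8) ℂ) - A).mulVec z = 0 ↔ A.mulVec z = lam • z := by
      intro z
      rw [Matrix.sub_mulVec, Matrix.smul_mulVec, Matrix.one_mulVec, sub_eq_zero, eq_comm]
    exact exists_congr fun z => and_congr_right fun _ => hzeq z
  -- skewness of the pencil
  have hskewpencil : ∀ lam : ℂ, (lam • M₁ - M₂)ᵀ = -(lam • M₁ - M₂) := by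
    intro lam
    rw [Matrix.transpose_sub, Matrix.transpose_smul, h₁, h₂]
    module
  -- each eigenvalue admits two independent eigenvectors, giving (X - lam)^2 ∣ charpoly
  have hdvd : ∀ lam ∈ Λ, (X - C lam) ^ 2 ∣ A.charpoly := by
    intro lam hlam
    have hsp : lam ∈ spectrum ℂ A := by rw [hspec]; exact_mod_cast hlam
    obtain ⟨z, hz0, hzeig⟩ := (hspeciff lam).mp hsp
    have hdet : (lam • M₁ - M₂).det = 0 :=
      Matrix.exists_mulVec_eq_zero_iff.mp ⟨z, hz0, (heigiff lam z).mp hzeig⟩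
    obtain ⟨u, w, hu, hw, hli⟩ := skew_ker_two (lam • M₁ - M₂) (hskewpencil lam) hdet
    exact eig_sq_dvd A lam u w ((heigiff lam u).mpr hu) ((heigiff lam w).mpr hw) hli
  have hp0 : A.charpoly ≠ 0 := (Matrix.charpoly_monic A).ne_zero
  have hmult2 : ∀ lam ∈ Λ, 2 ≤ A.charpoly.rootMultiplicity lam := by
    intro lam hlam
    exact (Polynomial.le_rootMultiplicity_iff hp0).mpr (hdvd lam hlam)
  -- counting: total multiplicity is at most 8
  have hsub : Λ ⊆ A.charpoly.roots.toFinset := by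
    intro lam hlam
    rw [Multiset.mem_toFinset, ← Multiset.count_pos, Polynomial.count_roots]
    have := hmult2 lam hlam
    omega
  have hsum8 : ∑ lam ∈ Λ, A.charpoly.rootMultiplicity lam ≤ 8 := by
    calc ∑ lam ∈ Λ, A.charpoly.rootMultiplicity lam
        = ∑ lam ∈ Λ, A.charpoly.roots.count lam := by
          refine Finset.sum_congr rfl fun lam _ => ?_
          rw [Polynomial.count_roots]
      _ ≤ ∑ lam ∈ A.charpoly.roots.toFinset, A.charpoly.roots.count lam :=
          Finset.sum_le_sum_of_subset hsub
      _ = Multiset.card A.charpoly.roots := Multiset.toFinset_sum_count_eq _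
      _ ≤ A.charpoly.natDegree := Polynomial.card_roots' _
      _ = 8 := by rw [Matrix.charpoly_natDegree_eq_dim, Fintype.card_fin]
  have hmexact : ∀ lam ∈ Λ, A.charpoly.rootMultiplicity lam = 2 := by
    intro lam hlam
    have hle : A.charpoly.rootMultiplicity lam ≤ 2 := by
      have hsplit := Finset.add_sum_erase Λ (fun l => A.charpoly.rootMultiplicity l) hlam
      have hcard' : (Λ.erase lam).card = 3 := by rw [Finset.card_erase_of_mem hlam, hcard]
      have hsplit' : A.charpoly.rootMultiplicity lam +
          ∑ l ∈ Λ.erase lam, A.charpoly.rootMultiplicity l =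
          ∑ l ∈ Λ, A.charpoly.rootMultiplicity l := hsplit
      have hlow : (Λ.erase lam).card • 2 ≤
          ∑ l ∈ Λ.erase lam, A.charpoly.rootMultiplicity l :=
        Finset.card_nsmul_le_sum _ _ _ fun x hx => hmult2 x (Finset.mem_of_mem_erase hx)
      clear hsplit
      rw [hcard'] at hlow
      simp only [smul_eq_mul] at hlow
      omega
    exact le_antisymm hle (hmult2 lam hlam)
  refine ⟨hmexact, ?_⟩
  -- the locus description
  have hvm₁ : ∀ z : Fin 8 → ℂ, z ᵥ* M₁ = -(M₁ *ᵥ z) := by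
    intro z
    rw [← Matrix.mulVec_transpose, h₁, Matrix.neg_mulVec]
  have hvm₂ : ∀ z : Fin 8 → ℂ, z ᵥ* M₂ = -(M₂ *ᵥ z) := by
    intro z
    rw [← Matrix.mulVec_transpose, h₂, Matrix.neg_mulVec]
  ext z
  simp only [Set.mem_setOf_eq, Set.mem_iUnion]
  constructor
  · rintro ⟨hz0, a, b, hab, hcomb⟩
    rw [hvm₁, hvm₂, smul_neg, smul_neg, ← neg_add, neg_eq_zero] at hcomb
    have hb : b ≠ 0 := by
      intro hb
      subst hb
      have ha : a ≠ 0 := by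
        intro ha
        exact hab (by rw [ha]; rfl)
      rw [zero_smul, add_zero] at hcomb
      have hM₁z : M₁ *ᵥ z = 0 := (smul_eq_zero.mp hcomb).resolve_left ha
      exact hd₁0 (Matrix.exists_mulVec_eq_zero_iff.mp ⟨z, hz0, hM₁z⟩)
    set lam : ℂ := -a / b with hlam
    have hpz : (lam • M₁ - M₂) *ᵥ z = 0 := by
      rw [Matrix.sub_mulVec, Matrix.smul_mulVec, sub_eq_zero]
      have h5 : b • (M₂ *ᵥ z) = (-a) • (M₁ *ᵥ z) := by
        rw [neg_smul]; exact eq_neg_of_add_eq_zero_right hcomb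
      have h6 : M₂ *ᵥ z = b⁻¹ • (b • (M₂ *ᵥ z)) := by
        rw [smul_smul, inv_mul_cancel₀ hb, one_smul]
      rw [hlam, h6, h5, smul_smul, ← div_eq_inv_mul]
    have heig : A.mulVec z = lam • z := (heigiff lam z).mpr hpz
    have hsp : lam ∈ spectrum ℂ A := (hspeciff lam).mpr ⟨z, hz0, heig⟩
    rw [hspec] at hsp
    exact ⟨lam, hsp, hz0, heig⟩
  · rintro ⟨lam, hlam, hz0, heig⟩
    refine ⟨hz0, lam, -1, ?_, ?_⟩
    · intro h
      have := congrArg Prod.snd h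
      simp at this
    · have hpz : (lam • M₁ - M₂) *ᵥ z = 0 := (heigiff lam z).mp heig
      rw [Matrix.sub_mulVec, Matrix.smul_mulVec, sub_eq_zero] at hpz
      rw [hvm₁, hvm₂, smul_neg, smul_neg, ← neg_add, neg_eq_zero, neg_one_smul, hpz,
        add_neg_cancel]
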